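/- Let m ≥ 3 be an odd integer, α := 1/(2m) − 1/2, and T > 0. Let f : [0,∞) → [0,∞) be nondecreasing and concave with lim_{r→0⁺} f(r) = 0, and let F : {(t,s) : 0 ≤ s < t} → [0,∞) satisfy: F(t,s) ≤ f(t−s); t ↦ F(t,s) is nondecreasing; and t ↦ (t−s)^α F(t,s) is nonincreasing on (s,∞). Define G̃(t,r) := 1_{r≤t}·(t−r)^α·F(t,r). Then sup_{s∈[0,T]} ∫_0^{s+ε} (G̃(s+ε,r) − G̃(s,r))² dr = o(ε^{1/m}) as ε → 0⁺, i.e. lim_{ε→0⁺} ε^{−1/m} · sup_{s∈[0,T]} ∫_0^{s+ε} (G̃(s+ε,r) − G̃(s,r))² dr = 0. -/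

import Mathlib

open Set MeasureTheory Filter Topology intervalIntegral

/-- Adapted Volterra kernel of Riemann–Liouville type with singularity exponent `α`
modulated by the factor `F`: `G̃(t,r) := 1_{r ≤ t} (t-r)^α F(t,r)`. -/
noncomputable def volterraKernel (α : ℝ) (F : ℝ → ℝ → ℝ) (t r : ℝ) : ℝ :=
  if r ≤ t then (t - r) ^ α * F t r else 0

/-- `(x^p)^2 = x^(2p)` for nonnegative `x`. -/
lemma sq_rpow_aux {x : ℝ} (hx : 0 ≤ x) (p : ℝ) : (x ^ p) ^ 2 = x ^ (2 * p) := by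
  rw [← Real.rpow_natCast (x ^ p) 2, ← Real.rpow_mul hx]
  norm_num [mul_comm]

/-- Bernoulli's inequality for exponents in `[-1, 0]`. -/
lemma bern_neg_aux {x p : ℝ} (hx : 0 ≤ x) (hp0 : -1 ≤ p) (hp : p ≤ 0) :
    1 + p * x ≤ (1 + x) ^ p := by
  rcases le_or_gt (1 + p * x) 0 with h | h
  · exact h.trans (Real.rpow_nonneg (by linarith) p)
  · have h1 : (1 + x) ^ (-p) ≤ 1 + (-p) * x :=
      rpow_one_add_le_one_add_mul_self (by linarith) (by linarith) (by linarith)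
    have h2 : (0 : ℝ) < (1 + x) ^ (-p) := Real.rpow_pos_of_pos (by linarith) _
    have h3 : (1 + x) ^ p = ((1 + x) ^ (-p))⁻¹ := by
      rw [← Real.rpow_neg (by linarith), neg_neg]
    have h4 : (1 + p * x) * ((1 + x) ^ (-p)) ≤ 1 := by
      nlinarith [mul_le_mul_of_nonneg_left h1 h.le, sq_nonneg (p * x)]
    calc 1 + p * x = (1 + p * x) * ((1 + x) ^ (-p)) * ((1 + x) ^ (-p))⁻¹ := by
          field_simp
      _ ≤ 1 * ((1 + x) ^ (-p))⁻¹ :=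
          mul_le_mul_of_nonneg_right h4 (inv_nonneg.2 h2.le)
      _ = (1 + x) ^ p := by rw [one_mul, h3]

/-- Mean-value type estimate for differences of negative powers. -/
lemma rpow_diff_le_aux {u ε p : ℝ} (hu : 0 < u) (he : 0 ≤ ε) (hp0 : -1 ≤ p) (hp : p ≤ 0) :
    u ^ p - (u + ε) ^ p ≤ (-p) * ε * u ^ (p - 1) := by
  have hb : 1 + p * (ε / u) ≤ (1 + ε / u) ^ p :=
    bern_neg_aux (div_nonneg he hu.le) hp0 hp
  have h1 : u ^ p * (1 + p * (ε / u)) ≤ u ^ p * ((1 + ε / u) ^ p) :=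
    mul_le_mul_of_nonneg_left hb (Real.rpow_nonneg hu.le p)
  have h2 : u ^ p * (1 + ε / u) ^ p = (u + ε) ^ p := by
    rw [← Real.mul_rpow hu.le (by positivity)]
    congr 1
    field_simp
  have h3 : u ^ p * (ε / u) = ε * u ^ (p - 1) := by
    rw [Real.rpow_sub hu, Real.rpow_one]
    field_simp
  have key : u ^ p * (1 + p * (ε / u)) = u ^ p + p * (ε * u ^ (p - 1)) := by
    rw [mul_add, mul_one, show u ^ p * (p * (ε / u)) = p * (u ^ p * (ε / u)) by ring, h3]
  have hfin : u ^ p + p * (ε * u ^ (p - 1)) ≤ (u + ε) ^ p := by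
    rw [← key, ← h2]; exact h1
  have hg : (-p) * ε * u ^ (p - 1) = -(p * (ε * u ^ (p - 1))) := by ring
  rw [hg]; linarith

set_option maxHeartbeats 2000000 in
theorem stmt14 (m : ℕ) (hm3 : 3 ≤ m) (hmodd : Odd m) (T : ℝ) (hT : 0 < T)
    (f : ℝ → ℝ)
    (hf_nn : ∀ r ∈ Ici (0:ℝ), 0 ≤ f r)
    (hf_mono : MonotoneOn f (Ici 0))
    (hf_conc : ConcaveOn ℝ (Ici 0) f)
    (hf_lim : Tendsto f (𝓝[>] 0) (𝓝 0))
    (F : ℝ → ℝ → ℝ)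
    (hF_nn : ∀ t s : ℝ, 0 ≤ s → s < t → 0 ≤ F t s)
    (hF_bd : ∀ t s : ℝ, 0 ≤ s → s < t → F t s ≤ f (t - s))
    (hF_mono : ∀ s : ℝ, 0 ≤ s → MonotoneOn (fun t => F t s) (Ioi s))
    (hF_anti : ∀ s : ℝ, 0 ≤ s →
      AntitoneOn (fun t => (t - s) ^ (1 / (2 * (m:ℝ)) - 1/2) * F t s) (Ioi s)) :
    Tendsto (fun ε : ℝ => ε ^ (-(1:ℝ) / (m:ℝ)) *
        sSup ((fun s => ∫ r in (0:ℝ)..(s + ε),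
            (volterraKernel (1 / (2 * (m:ℝ)) - 1/2) F (s + ε) r
              - volterraKernel (1 / (2 * (m:ℝ)) - 1/2) F s r) ^ 2) '' Icc 0 T))
      (𝓝[>] 0) (𝓝 0) := by
  set a : ℝ := 1 / (2 * (m:ℝ)) - 1/2 with ha_def
  have hmR : (3:ℝ) ≤ (m:ℝ) := by exact_mod_cast hm3
  have hm0 : (0:ℝ) < (m:ℝ) := by linarith
  have hmne : (m:ℝ) ≠ 0 := ne_of_gt hm0
  have hinv6 : 1 / (2 * (m:ℝ)) ≤ 1/6 := by
    rw [div_le_div_iff₀ (by linarith) (by norm_num)]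
    linarith
  have hinv0 : 0 < 1 / (2 * (m:ℝ)) := by positivity
  have ha1 : a < 0 := by rw [ha_def]; linarith
  have ha2 : -(1/2 : ℝ) < a := by rw [ha_def]; linarith
  have ham1 : (-1:ℝ) ≤ a := by rw [ha_def]; linarith
  have h2a1 : 2 * a + 1 = 1 / (m:ℝ) := by
    rw [ha_def]; field_simp; ring
  have h1m0 : 0 < 1 / (m:ℝ) := by positivity
  have h1m1 : 1 / (m:ℝ) ≤ 1 := by
    rw [div_le_one hm0]; linarith
  clear_value a
  rw [Metric.tendsto_nhds]
  intro η hη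
  -- choose θ
  obtain ⟨θ, hθpos, hθ1, hθη⟩ :
      ∃ θ : ℝ, 0 < θ ∧ θ ≤ 1 ∧ θ ≤ η / (4 * ((m:ℝ) + 1)) :=
    ⟨min 1 (η / (4 * ((m:ℝ) + 1))),
      lt_min one_pos (div_pos hη (by positivity)), min_le_left _ _, min_le_right _ _⟩
  -- choose δ with f (2δ) < θ
  have hpre : f ⁻¹' (Iio θ) ∈ 𝓝[>] (0:ℝ) := hf_lim (Iio_mem_nhds hθpos)
  obtain ⟨c, hc, hsub⟩ := (mem_nhdsGT_iff_exists_Ioo_subset).1 hpre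
  have hc0 : (0:ℝ) < c := hc
  obtain ⟨δ, hδpos, hf2δ⟩ : ∃ δ : ℝ, 0 < δ ∧ f (2 * δ) < θ :=
    ⟨c / 4, by linarith, hsub ⟨by linarith, by linarith⟩⟩
  -- constant K
  set K : ℝ := f (T + 1) ^ 2 * (a ^ 2 * δ ^ (2 * a - 2)) with hK_def
  have hK0 : 0 ≤ K := by
    apply mul_nonneg (sq_nonneg _)
    exact mul_nonneg (sq_nonneg _) (Real.rpow_nonneg hδpos.le _)
  set c2 : ℝ := f (2 * δ) ^ 2 with hc2_def
  have hc20 : 0 ≤ c2 := sq_nonneg _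
  clear_value K c2
  have hKT1 : (0:ℝ) < K * T + 1 :=
    add_pos_of_nonneg_of_pos (mul_nonneg hK0 hT.le) one_pos
  obtain ⟨ε₀, hε₀pos, hε₀δ, hε₀1, hε₀T, hε₀η⟩ :
      ∃ e : ℝ, 0 < e ∧ e ≤ δ ∧ e ≤ 1 ∧ e ≤ T ∧ e ≤ η / (4 * (K * T + 1)) :=
    ⟨min (min δ 1) (min T (η / (4 * (K * T + 1)))),
      lt_min (lt_min hδpos one_pos) (lt_min hT (div_pos hη (by positivity))),
      (min_le_left _ _).trans (min_le_left _ _),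
      (min_le_left _ _).trans (min_le_right _ _),
      (min_le_right _ _).trans (min_le_left _ _),
      (min_le_right _ _).trans (min_le_right _ _)⟩
  filter_upwards [Ioo_mem_nhdsGT_of_mem (⟨le_refl (0:ℝ), hε₀pos⟩ : (0:ℝ) ∈ Ico (0:ℝ) ε₀),
      hf_lim (Iio_mem_nhds hθpos)] with ε hεI hfε
  have hε : 0 < ε := hεI.1
  have hεδ : ε < δ := lt_of_lt_of_le hεI.2 hε₀δ
  have hε1 : ε ≤ 1 := le_of_lt (lt_of_lt_of_le hεI.2 hε₀1)
  have hεT : ε ≤ T := le_of_lt (lt_of_lt_of_le hεI.2 hε₀T)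
  have hεη : ε < η / (4 * (K * T + 1)) := lt_of_lt_of_le hεI.2 hε₀η
  have hfεθ : f ε < θ := hfε
  have hfεnn : 0 ≤ f ε := hf_nn ε (le_of_lt hε)
  have hf2δnn : 0 ≤ f (2 * δ) := hf_nn _ (mem_Ici.2 (by linarith))
  -- the comparison function
  set Gg : ℝ → ℝ := fun u => (u ^ a - (u + ε) ^ a) ^ 2 with hGg_def
  have hGgnn : ∀ u, 0 ≤ Gg u := fun u => sq_nonneg _
  have hGgMeas : Measurable Gg := by
    apply Measurable.pow_const
    exact (measurable_id.pow measurable_const).sub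
      ((measurable_id.add_const ε).pow measurable_const)
  clear_value Gg
  -- pointwise bounds for Gg
  have hGg_le1 : ∀ u : ℝ, 0 < u → Gg u ≤ u ^ (2 * a) := by
    intro u hu
    simp only [hGg_def]
    have hX0 : 0 ≤ u ^ a - (u + ε) ^ a :=
      sub_nonneg.2 (Real.rpow_le_rpow_of_nonpos hu (by linarith) ha1.le)
    have hXle : u ^ a - (u + ε) ^ a ≤ u ^ a := by
      have : 0 ≤ (u + ε) ^ a := Real.rpow_nonneg (by linarith) a
      linarith
    calc (u ^ a - (u + ε) ^ a) ^ 2 ≤ (u ^ a) ^ 2 := pow_le_pow_left₀ hX0 hXle 2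
      _ = u ^ (2 * a) := sq_rpow_aux hu.le a
  have hGg_le2 : ∀ u : ℝ, 0 < u → Gg u ≤ a ^ 2 * ε ^ 2 * u ^ (2 * a - 2) := by
    intro u hu
    simp only [hGg_def]
    have hX0 : 0 ≤ u ^ a - (u + ε) ^ a :=
      sub_nonneg.2 (Real.rpow_le_rpow_of_nonpos hu (by linarith) ha1.le)
    have hXb : u ^ a - (u + ε) ^ a ≤ (-a) * ε * u ^ (a - 1) :=
      rpow_diff_le_aux hu hε.le ham1 ha1.le
    calc (u ^ a - (u + ε) ^ a) ^ 2
        ≤ ((-a) * ε * u ^ (a - 1)) ^ 2 := pow_le_pow_left₀ hX0 hXb 2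
      _ = a ^ 2 * ε ^ 2 * (u ^ (a - 1)) ^ 2 := by ring
      _ = a ^ 2 * ε ^ 2 * u ^ (2 * a - 2) := by
          rw [sq_rpow_aux hu.le (a - 1), show 2 * (a - 1) = 2 * a - 2 by ring]
  -- integrability of Gg
  have hGgT : IntervalIntegrable Gg volume 0 T := by
    apply IntervalIntegrable.mono_fun
      (intervalIntegrable_rpow' (show (-1:ℝ) < 2 * a by linarith))
      hGgMeas.aestronglyMeasurable
    rw [uIoc_of_le hT.le]
    filter_upwards [ae_restrict_mem measurableSet_Ioc] with u hu
    have hu0 : 0 < u := hu.1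
    rw [Real.norm_eq_abs, Real.norm_eq_abs, abs_of_nonneg (hGgnn u),
      abs_of_nonneg (Real.rpow_nonneg hu0.le _)]
    exact hGg_le1 u hu0
  have hGint : ∀ s : ℝ, 0 ≤ s → s ≤ T → IntervalIntegrable Gg volume 0 s := by
    intro s hs0 hsT
    apply hGgT.mono_set
    rw [uIcc_of_le hs0, uIcc_of_le hT.le]
    exact Icc_subset_Icc le_rfl hsT
  have hstep4 : (∫ x in (0:ℝ)..ε, x ^ (2 * a)) = (m:ℝ) * ε ^ (1 / (m:ℝ)) := by
    rw [integral_rpow (Or.inl (by linarith : (-1:ℝ) < 2 * a))]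
    rw [h2a1, Real.zero_rpow (by positivity : 1 / (m:ℝ) ≠ 0), sub_zero, div_div_eq_mul_div,
      div_one, mul_comm]
  have hGs : ∀ s : ℝ, 0 ≤ s → s ≤ T →
      (∫ x in (0:ℝ)..s, Gg x) ≤ ((m:ℝ) + 1) * ε ^ (1 / (m:ℝ)) := by
    intro s hs0 hsT
    have hInt0s := hGint s hs0 hsT
    have hInt0e := hGint ε hε.le hεT
    have hIntsT : IntervalIntegrable Gg volume s T := by
      apply hGgT.mono_set
      rw [uIcc_of_le hsT, uIcc_of_le hT.le]
      exact Icc_subset_Icc hs0 le_rfl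
    have hInteT : IntervalIntegrable Gg volume ε T := by
      apply hGgT.mono_set
      rw [uIcc_of_le hεT, uIcc_of_le hT.le]
      exact Icc_subset_Icc hε.le le_rfl
    have step1 : (∫ x in (0:ℝ)..s, Gg x) ≤ ∫ x in (0:ℝ)..T, Gg x := by
      have hadd := integral_add_adjacent_intervals hInt0s hIntsT
      have hpos : 0 ≤ ∫ x in s..T, Gg x :=
        integral_nonneg hsT (fun u _ => hGgnn u)
      linarith [hadd]
    have step2 : (∫ x in (0:ℝ)..T, Gg x) = (∫ x in (0:ℝ)..ε, Gg x) + ∫ x in ε..T, Gg x :=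
      (integral_add_adjacent_intervals hInt0e hInteT).symm
    have step3 : (∫ x in (0:ℝ)..ε, Gg x) ≤ ∫ x in (0:ℝ)..ε, x ^ (2 * a) := by
      apply integral_mono_ae_restrict hε.le hInt0e
        (intervalIntegrable_rpow' (by linarith))
      have hne : ∀ᵐ u ∂(volume.restrict (Icc (0:ℝ) ε)), u ≠ 0 := by
        apply ae_restrict_of_ae
        rw [ae_iff]
        have hset : {u : ℝ | ¬ u ≠ 0} = {0} := by ext u; simp
        rw [hset]
        exact measure_singleton 0
      filter_upwards [hne, ae_restrict_mem measurableSet_Icc] with u hu0 huI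
      exact hGg_le1 u (lt_of_le_of_ne huI.1 (Ne.symm hu0))
    have step5 : (∫ x in ε..T, Gg x) ≤ ∫ x in ε..T, a ^ 2 * ε ^ 2 * x ^ (2 * a - 2) := by
      apply integral_mono_on hεT hInteT
      · apply IntervalIntegrable.const_mul
        apply intervalIntegrable_rpow (Or.inr ?_)
        rw [uIcc_of_le hεT]
        exact fun h => absurd h.1 (not_le.2 hε)
      · intro u hu
        exact hGg_le2 u (lt_of_lt_of_le hε hu.1)
    have step6 : (∫ x in ε..T, a ^ 2 * ε ^ 2 * x ^ (2 * a - 2)) ≤ ε ^ (1 / (m:ℝ)) := by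
      rw [intervalIntegral.integral_const_mul, integral_rpow (Or.inr ⟨by intro h; linarith,
        by rw [uIcc_of_le hεT]; exact fun h => absurd h.1 (not_le.2 hε)⟩)]
      have h2a2 : 2 * a - 2 + 1 = 2 * a - 1 := by ring
      rw [h2a2]
      have hTnn : 0 ≤ T ^ (2 * a - 1) := Real.rpow_nonneg hT.le _
      have hεnn : 0 ≤ ε ^ (2 * a - 1) := Real.rpow_nonneg hε.le _
      have hden : 2 * a - 1 < 0 := by linarith
      have h12a : (0:ℝ) < 1 - 2 * a := by linarith
      have hkey : (T ^ (2 * a - 1) - ε ^ (2 * a - 1)) / (2 * a - 1)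
          ≤ ε ^ (2 * a - 1) / (1 - 2 * a) := by
        have heq : (T ^ (2 * a - 1) - ε ^ (2 * a - 1)) / (2 * a - 1)
            = (ε ^ (2 * a - 1) - T ^ (2 * a - 1)) / (1 - 2 * a) := by
          rw [div_eq_div_iff (by linarith) (by linarith)]
          ring
        rw [heq]
        gcongr
        linarith
      have hee : ε ^ 2 * ε ^ (2 * a - 1) = ε ^ (1 / (m:ℝ)) := by
        rw [← h2a1, ← Real.rpow_natCast ε 2, ← Real.rpow_add hε]
        congr 1
        push_cast
        ring
      have hfrac : a ^ 2 / (1 - 2 * a) ≤ 1 := by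
        rw [div_le_one h12a]
        have hh : (-a) * (-a) ≤ (-a) * (1/2) :=
          mul_le_mul_of_nonneg_left (by linarith) (by linarith)
        have ha2eq : a ^ 2 = (-a) * (-a) := by ring
        linarith
      calc a ^ 2 * ε ^ 2 * ((T ^ (2 * a - 1) - ε ^ (2 * a - 1)) / (2 * a - 1))
          ≤ a ^ 2 * ε ^ 2 * (ε ^ (2 * a - 1) / (1 - 2 * a)) := by
            apply mul_le_mul_of_nonneg_left hkey (by positivity)
        _ = (a ^ 2 / (1 - 2 * a)) * (ε ^ 2 * ε ^ (2 * a - 1)) := by ring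
        _ = (a ^ 2 / (1 - 2 * a)) * ε ^ (1 / (m:ℝ)) := by rw [hee]
        _ ≤ 1 * ε ^ (1 / (m:ℝ)) :=
            mul_le_mul_of_nonneg_right hfrac (Real.rpow_nonneg hε.le _)
        _ = ε ^ (1 / (m:ℝ)) := one_mul _
    calc (∫ x in (0:ℝ)..s, Gg x) ≤ ∫ x in (0:ℝ)..T, Gg x := step1
      _ = (∫ x in (0:ℝ)..ε, Gg x) + ∫ x in ε..T, Gg x := step2
      _ ≤ (m:ℝ) * ε ^ (1 / (m:ℝ)) + ε ^ (1 / (m:ℝ)) := by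
          have h34 := step3.trans_eq hstep4
          have h56 := step5.trans step6
          linarith
      _ = ((m:ℝ) + 1) * ε ^ (1 / (m:ℝ)) := by ring
  -- main bound for each s
  have hbound : ∀ s ∈ Icc (0:ℝ) T,
      (∫ r in (0:ℝ)..(s + ε),
          (volterraKernel a F (s + ε) r - volterraKernel a F s r) ^ 2)
        ≤ (c2 * ((m:ℝ) + 1) + f ε ^ 2 * (m:ℝ)) * ε ^ (1 / (m:ℝ)) + K * T * ε ^ 2 := by
    rintro s ⟨hs0, hsT⟩
    set t : ℝ := s + ε with ht_def
    clear_value t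
    have hst : s < t := by rw [ht_def]; linarith
    have h0t : (0:ℝ) ≤ t := by rw [ht_def]; linarith
    -- pointwise bound on [0, s]
    have hpt1 : ∀ r ∈ Icc (0:ℝ) s,
        (volterraKernel a F t r - volterraKernel a F s r) ^ 2
          ≤ c2 * Gg (s - r) + K * ε ^ 2 := by
      rintro r ⟨hr0, hrs⟩
      have hrt : r ≤ t := by rw [ht_def]; linarith
      have hD1 : volterraKernel a F t r = (t - r) ^ a * F t r := if_pos hrt
      have hD2 : volterraKernel a F s r = (s - r) ^ a * F s r := if_pos hrs
      rcases eq_or_lt_of_le hrs with heq | hlt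
      · -- r = s
        have h0 : s - r = 0 := by rw [heq]; ring
        have hGg0 : Gg (s - r) = (ε ^ a) ^ 2 := by
          simp only [hGg_def]
          rw [h0, Real.zero_rpow ha1.ne, zero_add, zero_sub, neg_sq]
        have hkerS : volterraKernel a F s r = 0 := by
          rw [hD2, h0, Real.zero_rpow ha1.ne, zero_mul]
        have htr : t - r = ε := by rw [ht_def, heq]; ring
        have hrt' : r < t := by rw [ht_def, heq]; linarith
        have hFb2 : F t r ≤ f ε := by
          have := hF_bd t r hr0 hrt'
          rwa [htr] at this
        have hFnn2 : 0 ≤ F t r := hF_nn t r hr0 hrt'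
        have hfε2δ : f ε ≤ f (2 * δ) :=
          hf_mono (mem_Ici.2 hε.le) (mem_Ici.2 (by linarith)) (by linarith)
        have hDval : (volterraKernel a F t r - volterraKernel a F s r) ^ 2
            = (ε ^ a) ^ 2 * (F t r) ^ 2 := by
          rw [hkerS, sub_zero, hD1, htr, mul_pow]
        rw [hDval]
        calc (ε ^ a) ^ 2 * (F t r) ^ 2 ≤ (ε ^ a) ^ 2 * (f (2 * δ)) ^ 2 := by
              apply mul_le_mul_of_nonneg_left
                (pow_le_pow_left₀ hFnn2 (hFb2.trans hfε2δ) 2) (sq_nonneg _)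
          _ = c2 * Gg (s - r) := by rw [hGg0, hc2_def]; ring
          _ ≤ c2 * Gg (s - r) + K * ε ^ 2 :=
              le_add_of_nonneg_right (mul_nonneg hK0 (sq_nonneg _))
      · -- r < s
        have hu0 : 0 < s - r := by linarith
        have hsr_mem : s ∈ Ioi r := mem_Ioi.2 hlt
        have hrt' : r < t := by rw [ht_def]; linarith
        have htr_mem : t ∈ Ioi r := mem_Ioi.2 hrt'
        have hAB : (t - r) ^ a * F t r ≤ (s - r) ^ a * F s r :=
          hF_anti r hr0 hsr_mem htr_mem (by rw [ht_def]; linarith)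
        have hFm2 : F s r ≤ F t r :=
          hF_mono r hr0 hsr_mem htr_mem (by rw [ht_def]; linarith)
        have hFb2 : F t r ≤ f (t - r) := hF_bd t r hr0 hrt'
        have hFnn2 : 0 ≤ F t r := hF_nn t r hr0 hrt'
        have htr0 : 0 < t - r := by linarith
        have hfnn2 : 0 ≤ f (t - r) := hf_nn _ (mem_Ici.2 htr0.le)
        have hsrtr : s - r ≤ t - r := by rw [ht_def]; linarith
        have hX0 : 0 ≤ (s - r) ^ a - (t - r) ^ a :=
          sub_nonneg.2 (Real.rpow_le_rpow_of_nonpos hu0 hsrtr ha1.le)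
        have hDle : (volterraKernel a F t r - volterraKernel a F s r) ^ 2
            ≤ (((s - r) ^ a - (t - r) ^ a) * f (t - r)) ^ 2 := by
          rw [hD1, hD2]
          apply sq_le_sq'
          · have h1 : (s - r) ^ a * F s r ≤ (s - r) ^ a * F t r :=
              mul_le_mul_of_nonneg_left hFm2 (Real.rpow_nonneg hu0.le a)
            have h2 : ((s - r) ^ a - (t - r) ^ a) * F t r
                ≤ ((s - r) ^ a - (t - r) ^ a) * f (t - r) :=
              mul_le_mul_of_nonneg_left hFb2 hX0
            have h3 : (t - r) ^ a * F t r - (s - r) ^ a * F t r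
                = -(((s - r) ^ a - (t - r) ^ a) * F t r) := by ring
            linarith
          · have := mul_nonneg hX0 hfnn2
            linarith
        have htreq : s - r + ε = t - r := by rw [ht_def]; ring
        by_cases huδ : s - r ≤ δ
        · have hfle : f (t - r) ≤ f (2 * δ) :=
            hf_mono (mem_Ici.2 htr0.le) (mem_Ici.2 (by linarith))
              (by rw [ht_def]; linarith)
          have hGgX : Gg (s - r) = ((s - r) ^ a - (t - r) ^ a) ^ 2 := by
            simp only [hGg_def]
            rw [htreq]
          calc (volterraKernel a F t r - volterraKernel a F s r) ^ 2
              ≤ (((s - r) ^ a - (t - r) ^ a) * f (t - r)) ^ 2 := hDle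
            _ = ((s - r) ^ a - (t - r) ^ a) ^ 2 * (f (t - r)) ^ 2 := by ring
            _ ≤ ((s - r) ^ a - (t - r) ^ a) ^ 2 * (f (2 * δ)) ^ 2 :=
                mul_le_mul_of_nonneg_left (pow_le_pow_left₀ hfnn2 hfle 2) (sq_nonneg _)
            _ = c2 * Gg (s - r) := by rw [hGgX, hc2_def]; ring
            _ ≤ c2 * Gg (s - r) + K * ε ^ 2 :=
                le_add_of_nonneg_right (mul_nonneg hK0 (sq_nonneg _))
        · push_neg at huδ
          have hfle : f (t - r) ≤ f (T + 1) :=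
            hf_mono (mem_Ici.2 htr0.le) (mem_Ici.2 (by linarith))
              (by rw [ht_def]; linarith)
          have hXb : (s - r) ^ a - (t - r) ^ a ≤ (-a) * ε * (s - r) ^ (a - 1) := by
            have := rpow_diff_le_aux hu0 hε.le ham1 ha1.le
            rwa [htreq] at this
          have hX2 : ((s - r) ^ a - (t - r) ^ a) ^ 2
              ≤ a ^ 2 * ε ^ 2 * (s - r) ^ (2 * a - 2) := by
            calc ((s - r) ^ a - (t - r) ^ a) ^ 2
                ≤ ((-a) * ε * (s - r) ^ (a - 1)) ^ 2 := pow_le_pow_left₀ hX0 hXb 2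
              _ = a ^ 2 * ε ^ 2 * ((s - r) ^ (a - 1)) ^ 2 := by ring
              _ = a ^ 2 * ε ^ 2 * (s - r) ^ (2 * a - 2) := by
                  rw [sq_rpow_aux hu0.le (a - 1), show 2 * (a - 1) = 2 * a - 2 by ring]
          have hpow : (s - r) ^ (2 * a - 2) ≤ δ ^ (2 * a - 2) :=
            Real.rpow_le_rpow_of_nonpos hδpos huδ.le (by linarith)
          calc (volterraKernel a F t r - volterraKernel a F s r) ^ 2
              ≤ (((s - r) ^ a - (t - r) ^ a) * f (t - r)) ^ 2 := hDle
            _ = ((s - r) ^ a - (t - r) ^ a) ^ 2 * (f (t - r)) ^ 2 := by ring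
            _ ≤ (a ^ 2 * ε ^ 2 * (s - r) ^ (2 * a - 2)) * (f (T + 1)) ^ 2 := by
                apply mul_le_mul hX2 (pow_le_pow_left₀ hfnn2 hfle 2) (sq_nonneg _)
                positivity
            _ ≤ (a ^ 2 * ε ^ 2 * δ ^ (2 * a - 2)) * (f (T + 1)) ^ 2 := by
                apply mul_le_mul_of_nonneg_right ?_ (sq_nonneg _)
                apply mul_le_mul_of_nonneg_left hpow (by positivity)
            _ = K * ε ^ 2 := by rw [hK_def]; ring
            _ ≤ c2 * Gg (s - r) + K * ε ^ 2 :=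
                le_add_of_nonneg_left (mul_nonneg hc20 (hGgnn _))
    -- pointwise bound on [s, t]
    have hpt2 : ∀ r ∈ Icc s t,
        (volterraKernel a F t r - volterraKernel a F s r) ^ 2
          ≤ f ε ^ 2 * ((t - r) ^ (2 * a)) := by
      rintro r ⟨hsr, hrt⟩
      have hr0 : 0 ≤ r := by linarith
      have hkerS : volterraKernel a F s r = 0 := by
        by_cases h : r ≤ s
        · have h0 : s - r = 0 := by linarith
          rw [volterraKernel, if_pos h, h0, Real.zero_rpow ha1.ne, zero_mul]
        · rw [volterraKernel, if_neg h]
      have hD1 : volterraKernel a F t r = (t - r) ^ a * F t r := if_pos hrt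
      rcases eq_or_lt_of_le hrt with heq | hlt
      · have h0 : t - r = 0 := by rw [heq]; ring
        have hkerT : volterraKernel a F t r = 0 := by
          rw [hD1, h0, Real.zero_rpow ha1.ne, zero_mul]
        rw [hkerS, hkerT, sub_zero, h0, Real.zero_rpow (by intro h; linarith : 2 * a ≠ 0)]
        norm_num
      · have hFb2 : F t r ≤ f (t - r) := hF_bd t r hr0 hlt
        have hFnn2 : 0 ≤ F t r := hF_nn t r hr0 hlt
        have htr0 : 0 < t - r := by linarith
        have hfle : f (t - r) ≤ f ε :=
          hf_mono (mem_Ici.2 htr0.le) (mem_Ici.2 hε.le) (by rw [ht_def]; linarith)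
        rw [hkerS, sub_zero, hD1]
        calc ((t - r) ^ a * F t r) ^ 2 = ((t - r) ^ a) ^ 2 * (F t r) ^ 2 := by ring
          _ ≤ ((t - r) ^ a) ^ 2 * (f ε) ^ 2 :=
              mul_le_mul_of_nonneg_left
                (pow_le_pow_left₀ hFnn2 (hFb2.trans hfle) 2) (sq_nonneg _)
          _ = f ε ^ 2 * ((t - r) ^ (2 * a)) := by
              rw [sq_rpow_aux htr0.le a, mul_comm]
    -- integrability of the comparison functions
    have hIntΨ1 : IntervalIntegrable (fun r => c2 * Gg (s - r) + K * ε ^ 2) volume 0 s := by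
      apply IntervalIntegrable.add ?_ intervalIntegrable_const
      have h1 := ((hGint s hs0 hsT).comp_sub_left s).symm
      have h2 := h1.const_mul c2
      simpa using h2
    have hIntΨ2 : IntervalIntegrable (fun r => f ε ^ 2 * ((t - r) ^ (2 * a))) volume s t := by
      have base : IntervalIntegrable (fun x : ℝ => x ^ (2 * a)) volume 0 ε :=
        intervalIntegrable_rpow' (by linarith)
      have h1 := (base.comp_sub_left t).symm
      have h2 := h1.const_mul (f ε ^ 2)
      have he1 : t - ε = s := by rw [ht_def]; ring
      have he2 : t - 0 = t := by ring
      rw [he1, he2] at h2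
      exact h2
    -- value bounds
    have hval1 : (∫ r in (0:ℝ)..s, (c2 * Gg (s - r) + K * ε ^ 2))
        ≤ c2 * (((m:ℝ) + 1) * ε ^ (1 / (m:ℝ))) + K * ε ^ 2 * T := by
      have hi1 : IntervalIntegrable (fun r => c2 * Gg (s - r)) volume 0 s := by
        have h1 := ((hGint s hs0 hsT).comp_sub_left s).symm
        simpa using h1.const_mul c2
      have e1 : (∫ r in (0:ℝ)..s, c2 * Gg (s - r)) = c2 * ∫ x in (0:ℝ)..s, Gg x := by
        rw [intervalIntegral.integral_const_mul]
        congr 1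
        calc (∫ r in (0:ℝ)..s, Gg (s - r))
            = ∫ x in (s - s)..(s - 0), Gg x := integral_comp_sub_left Gg s
          _ = ∫ x in (0:ℝ)..s, Gg x := by norm_num
      have e2 : (∫ _r in (0:ℝ)..s, (K * ε ^ 2 : ℝ)) = K * ε ^ 2 * s := by
        rw [intervalIntegral.integral_const, smul_eq_mul, sub_zero]
        ring
      rw [integral_add hi1 intervalIntegrable_const, e1, e2]
      have hGsb := hGs s hs0 hsT
      have h1 : c2 * (∫ x in (0:ℝ)..s, Gg x) ≤ c2 * (((m:ℝ) + 1) * ε ^ (1 / (m:ℝ))) :=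
        mul_le_mul_of_nonneg_left hGsb hc20
      have h2 : K * ε ^ 2 * s ≤ K * ε ^ 2 * T :=
        mul_le_mul_of_nonneg_left hsT (mul_nonneg hK0 (sq_nonneg _))
      linarith
    have hval2 : (∫ r in s..t, f ε ^ 2 * ((t - r) ^ (2 * a)))
        = f ε ^ 2 * ((m:ℝ) * ε ^ (1 / (m:ℝ))) := by
      rw [intervalIntegral.integral_const_mul]
      congr 1
      calc (∫ r in s..t, (t - r) ^ (2 * a))
          = ∫ x in (t - t)..(t - s), x ^ (2 * a) :=
            integral_comp_sub_left (fun x : ℝ => x ^ (2 * a)) t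
        _ = ∫ x in (0:ℝ)..ε, x ^ (2 * a) := by
            rw [show t - t = (0:ℝ) by ring, show t - s = ε by rw [ht_def]; ring]
        _ = (m:ℝ) * ε ^ (1 / (m:ℝ)) := hstep4
    -- combine
    have hRHS : c2 * (((m:ℝ) + 1) * ε ^ (1 / (m:ℝ))) + K * ε ^ 2 * T
        + f ε ^ 2 * ((m:ℝ) * ε ^ (1 / (m:ℝ)))
        = (c2 * ((m:ℝ) + 1) + f ε ^ 2 * (m:ℝ)) * ε ^ (1 / (m:ℝ)) + K * T * ε ^ 2 := by
      ring
    by_cases hInt : IntervalIntegrable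
        (fun r => (volterraKernel a F t r - volterraKernel a F s r) ^ 2) volume 0 t
    · have hi0s : IntervalIntegrable
          (fun r => (volterraKernel a F t r - volterraKernel a F s r) ^ 2) volume 0 s := by
        apply hInt.mono_set
        rw [uIcc_of_le hs0, uIcc_of_le h0t]
        exact Icc_subset_Icc le_rfl (by rw [ht_def]; linarith)
      have hist : IntervalIntegrable
          (fun r => (volterraKernel a F t r - volterraKernel a F s r) ^ 2) volume s t := by
        apply hInt.mono_set
        rw [uIcc_of_le hst.le, uIcc_of_le h0t]
        exact Icc_subset_Icc hs0 le_rfl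
      have hsplit := integral_add_adjacent_intervals hi0s hist
      have hm1 := (integral_mono_on hs0 hi0s hIntΨ1 hpt1).trans hval1
      have hm2 := (integral_mono_on hst.le hist hIntΨ2 hpt2).trans_eq hval2
      rw [← hRHS, ← hsplit]
      linarith
    · rw [intervalIntegral.integral_undef hInt]
      have h1 : 0 ≤ (c2 * ((m:ℝ) + 1) + f ε ^ 2 * (m:ℝ)) * ε ^ (1 / (m:ℝ)) :=
        mul_nonneg
          (add_nonneg (mul_nonneg hc20 (by linarith)) (mul_nonneg (sq_nonneg _) hm0.le))
          (Real.rpow_nonneg hε.le _)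
      have h2 : 0 ≤ K * T * ε ^ 2 := mul_nonneg (mul_nonneg hK0 hT.le) (sq_nonneg _)
      linarith
  -- put everything together
  have hΦ0 : 0 ≤ (c2 * ((m:ℝ) + 1) + f ε ^ 2 * (m:ℝ)) * ε ^ (1 / (m:ℝ)) + K * T * ε ^ 2 := by
    have h1 : 0 ≤ (c2 * ((m:ℝ) + 1) + f ε ^ 2 * (m:ℝ)) * ε ^ (1 / (m:ℝ)) :=
      mul_nonneg
        (add_nonneg (mul_nonneg hc20 (by linarith)) (mul_nonneg (sq_nonneg _) hm0.le))
        (Real.rpow_nonneg hε.le _)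
    have h2 : 0 ≤ K * T * ε ^ 2 := mul_nonneg (mul_nonneg hK0 hT.le) (sq_nonneg _)
    linarith
  have hsup_le : sSup ((fun s => ∫ r in (0:ℝ)..(s + ε),
      (volterraKernel a F (s + ε) r - volterraKernel a F s r) ^ 2) '' Icc 0 T)
      ≤ (c2 * ((m:ℝ) + 1) + f ε ^ 2 * (m:ℝ)) * ε ^ (1 / (m:ℝ)) + K * T * ε ^ 2 := by
    apply Real.sSup_le ?_ hΦ0
    rintro v ⟨s, hs, rfl⟩
    exact hbound s hs
  have hsup_nn : 0 ≤ sSup ((fun s => ∫ r in (0:ℝ)..(s + ε),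
      (volterraKernel a F (s + ε) r - volterraKernel a F s r) ^ 2) '' Icc 0 T) := by
    apply Real.sSup_nonneg
    rintro v ⟨s, hs, rfl⟩
    exact integral_nonneg (by linarith [hs.1]) (fun u _ => sq_nonneg _)
  rw [Real.dist_eq, sub_zero, abs_of_nonneg (mul_nonneg (Real.rpow_nonneg hε.le _) hsup_nn)]
  have hQ := mul_le_mul_of_nonneg_left hsup_le
    (Real.rpow_nonneg hε.le (-(1:ℝ) / (m:ℝ)))
  have hcanc : ε ^ (-(1:ℝ) / (m:ℝ)) * ε ^ (1 / (m:ℝ)) = 1 := by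
    rw [← Real.rpow_add hε, show -(1:ℝ) / (m:ℝ) + 1 / (m:ℝ) = 0 by ring, Real.rpow_zero]
  have heps2 : ε ^ (-(1:ℝ) / (m:ℝ)) * ε ^ 2 ≤ ε := by
    have h1 : ε ^ (-(1:ℝ) / (m:ℝ)) * ε ^ 2 = ε ^ (2 - 1 / (m:ℝ)) := by
      rw [← Real.rpow_natCast ε 2, ← Real.rpow_add hε]
      congr 1
      push_cast
      ring
    rw [h1]
    calc ε ^ (2 - 1 / (m:ℝ)) ≤ ε ^ (1:ℝ) :=
        Real.rpow_le_rpow_of_exponent_ge hε hε1 (by linarith)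
      _ = ε := Real.rpow_one ε
  have hΦexp : ε ^ (-(1:ℝ) / (m:ℝ)) *
      ((c2 * ((m:ℝ) + 1) + f ε ^ 2 * (m:ℝ)) * ε ^ (1 / (m:ℝ)) + K * T * ε ^ 2)
      ≤ (c2 * ((m:ℝ) + 1) + f ε ^ 2 * (m:ℝ)) + K * T * ε := by
    have hexpand : ε ^ (-(1:ℝ) / (m:ℝ)) *
        ((c2 * ((m:ℝ) + 1) + f ε ^ 2 * (m:ℝ)) * ε ^ (1 / (m:ℝ)) + K * T * ε ^ 2)
        = (c2 * ((m:ℝ) + 1) + f ε ^ 2 * (m:ℝ)) * (ε ^ (-(1:ℝ) / (m:ℝ)) * ε ^ (1 / (m:ℝ)))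
          + K * T * (ε ^ (-(1:ℝ) / (m:ℝ)) * ε ^ 2) := by ring
    rw [hexpand, hcanc, mul_one]
    have hKTnn : 0 ≤ K * T := mul_nonneg hK0 hT.le
    have := mul_le_mul_of_nonneg_left heps2 hKTnn
    linarith
  have hc2θ : c2 ≤ θ := by
    rw [hc2_def]
    have h1 : f (2 * δ) ^ 2 ≤ θ ^ 2 := pow_le_pow_left₀ hf2δnn hf2δ.le 2
    have h2 : θ ^ 2 ≤ θ := by
      have := mul_le_mul_of_nonneg_right hθ1 hθpos.le
      calc θ ^ 2 = θ * θ := sq θ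
        _ ≤ 1 * θ := this
        _ = θ := one_mul θ
    linarith
  have hfεθ2 : f ε ^ 2 ≤ θ := by
    have h1 : f ε ^ 2 ≤ θ ^ 2 := pow_le_pow_left₀ hfεnn hfεθ.le 2
    have h2 : θ ^ 2 ≤ θ := by
      have := mul_le_mul_of_nonneg_right hθ1 hθpos.le
      calc θ ^ 2 = θ * θ := sq θ
        _ ≤ 1 * θ := this
        _ = θ := one_mul θ
    linarith
  have hfinal : (c2 * ((m:ℝ) + 1) + f ε ^ 2 * (m:ℝ)) + K * T * ε < η := by
    have h1 : c2 * ((m:ℝ) + 1) ≤ θ * ((m:ℝ) + 1) :=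
      mul_le_mul_of_nonneg_right hc2θ (by linarith)
    have h2 : f ε ^ 2 * (m:ℝ) ≤ θ * (m:ℝ) :=
      mul_le_mul_of_nonneg_right hfεθ2 hm0.le
    have h3 : θ * ((m:ℝ) + 1) ≤ η / 4 := by
      have h3a := mul_le_mul_of_nonneg_right hθη (by linarith : (0:ℝ) ≤ (m:ℝ) + 1)
      have h3b : (η / (4 * ((m:ℝ) + 1))) * ((m:ℝ) + 1) = η / 4 := by
        field_simp
      linarith
    have h4 : K * T * ε < η / 4 := by
      have h5 : K * T * ε ≤ (K * T + 1) * ε :=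
        mul_le_mul_of_nonneg_right (by linarith) hε.le
      have h6 : (K * T + 1) * ε < (K * T + 1) * (η / (4 * (K * T + 1))) :=
        mul_lt_mul_of_pos_left hεη hKT1
      have h7 : (K * T + 1) * (η / (4 * (K * T + 1))) = η / 4 := by
        field_simp
      linarith
    have h8 : θ * (m:ℝ) ≤ θ * ((m:ℝ) + 1) :=
      mul_le_mul_of_nonneg_left (by linarith) hθpos.le
    linarith
  exact lt_of_le_of_lt (hQ.trans hΦexp) hfinal
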